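/- Let M = ⟨S, A, T, s0⟩ be an nrMDP, λ : A × S → Z a labeling function, and R = ⟨U, u0, Z, δ_u, δ_r, c⟩ a Mealy reward machine. Let M↻ denote M extended with the reset action ↻ (actions A ∪ {↻}, T(s, ↻, s0) = 1 for all s ∈ S), where every ↻-step is assigned reward c_↻ and non-reset steps are rewarded by R as before. Then for every strategy π for M↻ and the corresponding strategy π^{⊗↻} of the homing synchronized product P↻ = M ⊗↻_λ R, the expected mean payoffs coincide: E^{M↻,π}_{s0}(MP(R)) = E^{P↻,π^{⊗↻}}_{(s0,u0)}(MP(R^{⊗↻})). -/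

import Mathlib

open MeasureTheory Filter

attribute [local instance] Classical.propDecidable

/-- A non-rewarding Markov decision process over finite state set `S` and
finite action set `A`. -/
structure NRMDP (S A : Type) [Fintype S] [Fintype A] where
  T : S → A → S → ℝ
  T_nonneg : ∀ s a s', 0 ≤ T s a s'
  T_le_one : ∀ s a s', T s a s' ≤ 1
  T_sum_one : ∀ s a, ∑ s', T s a s' = 1
  s0 : S

/-- A Mealy reward machine over the finite observation set `Z` with
distinguished observation `null`. -/
structure MRM (U Z : Type) [Fintype U] [Fintype Z] (null : Z) where
  u0 : U
  δu : U → Z → U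
  δr : U → Z → ℝ
  c : ℝ
  δu_null : ∀ u, δu u null = u
  δr_null : ∀ u, δr u null = c

variable {S A U Z St Ac : Type}

/-- `ValidFrom T s steps` : the alternating sequence starting at `s` whose
successive (action, next-state) steps are `steps` has positive transition
probability at every step. -/
def ValidFrom (T : St → Ac → St → ℝ) : St → List (Ac × St) → Prop
  | _, [] => True
  | s, step :: rest => 0 < T s step.1 step.2 ∧ ValidFrom T step.2 rest

/-- Transition function of the synchronized product `M ⊗_λ R`. -/
noncomputable def prodT (T : S → A → S → ℝ) (lab : A → S → Z) (δu : U → Z → U) :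
    S × U → A → S × U → ℝ :=
  fun p a q => if q.2 = δu p.2 (lab a q.1) then T p.1 a q.1 else 0

/-- The map `B` (on the step list of a history), lifting a history of `M`
to a history of the synchronized product by tracking the MRM node. -/
def liftHist (lab : A → S → Z) (δu : U → Z → U) : U → List (A × S) → List (A × (S × U))
  | _, [] => []
  | u, (a, s') :: rest =>
      (a, (s', δu u (lab a s'))) :: liftHist lab δu (δu u (lab a s')) rest

/-- Every trajectory space `ℕ → X` over a (finite) state or step space `X`
carries the product of the discrete σ-algebras. -/
instance trajMeasurableSpace (X : Type) : MeasurableSpace (ℕ → X) :=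
  @MeasurableSpace.pi ℕ (fun _ => X) (fun _ => ⊤)

/-- The cylinder of infinite trajectories extending the finite prefix `pre`. -/
def Cyl {X : Type} (pre : List X) : Set (ℕ → X) :=
  {ω | ∀ i : ℕ, i < pre.length → pre[i]? = some (ω i)}

/-- Auxiliary function: probability of a finite step sequence, given the
current state, the history so far (fed to the strategy) and the remaining
steps. -/
noncomputable def prefixProbAux (T : St → Ac → St → ℝ) (π : List (Ac × St) → Ac) :
    St → List (Ac × St) → List (Ac × St) → ℝ
  | _, _, [] => 1
  | s, past, (a, s') :: rest =>
      (if a = π past then T s a s' else 0) *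
        prefixProbAux T π s' (past ++ [(a, s')]) rest

/-- Probability, under strategy `π` from state `s0`, of the finite step
sequence `h`. -/
noncomputable def prefixProb (T : St → Ac → St → ℝ) (π : List (Ac × St) → Ac)
    (s0 : St) (h : List (Ac × St)) : ℝ :=
  prefixProbAux T π s0 [] h

/-- `IsInduced T π s0 μ` : `μ` is the probability measure on infinite
histories induced (via the Ionescu–Tulcea theorem) by playing strategy `π`
from `s0` in the MDP with transition function `T`; it is characterized by
its values on cylinders. -/
def IsInduced (T : St → Ac → St → ℝ) (π : List (Ac × St) → Ac) (s0 : St)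
    (μ : MeasureTheory.Measure (ℕ → Ac × St)) : Prop :=
  MeasureTheory.IsProbabilityMeasure μ ∧
    ∀ h : List (Ac × St), μ (Cyl h) = ENNReal.ofReal (prefixProb T π s0 h)

/-- The MRM node reached after `i` steps of the infinite history `ω`. -/
def nodeAt (lab : A → S → Z) (δu : U → Z → U) (u0 : U) (ω : ℕ → A × S) : ℕ → U
  | 0 => u0
  | i + 1 => δu (nodeAt lab δu u0 ω i) (lab (ω i).1 (ω i).2)

/-- The reward trace (under the MRM) of the infinite history `ω` of `M`. -/
noncomputable def rewAt (lab : A → S → Z) (δu : U → Z → U) (δr : U → Z → ℝ)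
    (u0 : U) (ω : ℕ → A × S) (i : ℕ) : ℝ :=
  δr (nodeAt lab δu u0 ω i) (lab (ω i).1 (ω i).2)

/-- The mean payoff `limsup_k (1/k) ∑_{i=1}^k r_i` of an infinite reward
sequence. -/
noncomputable def meanPayoff (r : ℕ → ℝ) : ℝ :=
  Filter.limsup (fun k : ℕ => (∑ i ∈ Finset.range k, r i) / k) Filter.atTop

/-- The product-MDP state occupied before step `i` along an infinite history
of the synchronized product (only its MRM-node component is recorded). -/
def prodNodeAt (u0 : U) (ω : ℕ → A × (S × U)) : ℕ → U
  | 0 => u0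
  | i + 1 => (ω i).2.2

/-- The immediate rewards `R⊗` collected along an infinite history of the
synchronized product. -/
noncomputable def prodRewAt (lab : A → S → Z) (δr : U → Z → ℝ) (u0 : U)
    (ω : ℕ → A × (S × U)) (i : ℕ) : ℝ :=
  δr (prodNodeAt u0 ω i) (lab (ω i).1 (ω i).2.1)

/-- Transition function of `M↻`: `M` extended with the reset action
(`Sum.inr ()`), which returns to the initial state with probability 1. -/
noncomputable def resetT (T : S → A → S → ℝ) (s0 : S) : S → A ⊕ Unit → S → ℝ
  | s, Sum.inl a, s' => T s a s'
  | _, Sum.inr _, s' => if s' = s0 then 1 else 0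

/-- Transition function of the homing synchronized product `P↻ = M ⊗↻_λ R`. -/
noncomputable def homT (T : S → A → S → ℝ) (lab : A → S → Z) (δu : U → Z → U)
    (s0 : S) (u0 : U) : S × U → A ⊕ Unit → S × U → ℝ
  | p, Sum.inl a, q => if q.2 = δu p.2 (lab a q.1) then T p.1 a q.1 else 0
  | _, Sum.inr _, q => if q = (s0, u0) then 1 else 0

/-- The MRM node reached after `i` steps of an infinite history of `M↻`
(a reset step returns the machine to its start node). -/
def nodeAtReset (lab : A → S → Z) (δu : U → Z → U) (u0 : U)
    (ω : ℕ → (A ⊕ Unit) × S) : ℕ → U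
  | 0 => u0
  | i + 1 =>
      match (ω i).1 with
      | Sum.inl a => δu (nodeAtReset lab δu u0 ω i) (lab a (ω i).2)
      | Sum.inr _ => u0

/-- The reward trace of an infinite history of `M↻`: rewards of `R` on
non-reset steps and the reset cost `creset` on reset steps. -/
noncomputable def rewAtReset (lab : A → S → Z) (δu : U → Z → U) (δr : U → Z → ℝ)
    (u0 : U) (creset : ℝ) (ω : ℕ → (A ⊕ Unit) × S) (i : ℕ) : ℝ :=
  match (ω i).1 with
  | Sum.inl a => δr (nodeAtReset lab δu u0 ω i) (lab a (ω i).2)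
  | Sum.inr _ => creset

/-- The history bijection `B` for `M↻`, lifting (step lists of) histories
of `M↻` to histories of the homing synchronized product. -/
def liftHistReset (lab : A → S → Z) (δu : U → Z → U) (u0 : U) :
    U → List ((A ⊕ Unit) × S) → List ((A ⊕ Unit) × (S × U))
  | _, [] => []
  | u, (Sum.inl a, s') :: rest =>
      (Sum.inl a, (s', δu u (lab a s'))) ::
        liftHistReset lab δu u0 (δu u (lab a s')) rest
  | _, (Sum.inr x, s') :: rest =>
      (Sum.inr x, (s', u0)) :: liftHistReset lab δu u0 u0 rest

/-- The product-MDP node occupied before step `i` along an infinite history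
of the homing synchronized product. -/
def homNodeAt (u0 : U) (ω : ℕ → (A ⊕ Unit) × (S × U)) : ℕ → U
  | 0 => u0
  | i + 1 => (ω i).2.2

/-- The immediate rewards `R^{⊗↻}` collected along an infinite history of
the homing synchronized product. -/
noncomputable def homRewAt (lab : A → S → Z) (δr : U → Z → ℝ) (u0 : U)
    (creset : ℝ) (ω : ℕ → (A ⊕ Unit) × (S × U)) (i : ℕ) : ℝ :=
  match (ω i).1 with
  | Sum.inl a => δr (homNodeAt u0 ω i) (lab a (ω i).2.1)
  | Sum.inr _ => creset

section Comb
variable (lab : A → S → Z) (δu : U → Z → U) (u0 : U)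

def stripL : List ((A ⊕ Unit) × (S × U)) → List ((A ⊕ Unit) × S) :=
  List.map (fun p => (p.1, p.2.1))

noncomputable def PhiMap (ω : ℕ → (A ⊕ Unit) × S) : ℕ → (A ⊕ Unit) × (S × U) :=
  fun i => ((ω i).1, ((ω i).2, nodeAtReset lab δu u0 ω (i+1)))

/-- prefix of length `n` of a trajectory. -/
def pfx {X : Type} (ω : ℕ → X) (n : ℕ) : List X := List.ofFn (fun j : Fin n => ω (j : ℕ))

@[simp] lemma pfx_length {X : Type} (ω : ℕ → X) (n : ℕ) : (pfx ω n).length = n := by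
  simp [pfx]

lemma pfx_getElem? {X : Type} (ω : ℕ → X) {n i : ℕ} (hi : i < n) :
    (pfx ω n)[i]? = some (ω i) := by
  simp [pfx, List.getElem?_ofFn, hi]

lemma mem_Cyl {X : Type} {h : List X} {ω : ℕ → X} :
    ω ∈ Cyl h ↔ pfx ω h.length = h := by
  constructor
  · intro hm
    apply List.ext_getElem?
    intro i
    by_cases hi : i < h.length
    · rw [pfx_getElem? ω hi, hm i hi]
    · rw [List.getElem?_eq_none (by simp; omega), List.getElem?_eq_none (by omega)]
  · intro hp i hi
    conv_lhs => rw [← hp]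
    exact pfx_getElem? ω hi

lemma pfx_take {X : Type} (ω : ℕ → X) {m n : ℕ} (h : m ≤ n) : (pfx ω n).take m = pfx ω m := by
  apply List.ext_getElem (by simp [pfx]; omega)
  intro i h1 h2
  simp [pfx]

lemma measurableSet_eval_preimage {X : Type} (i : ℕ) (s : Set X) :
    MeasurableSet[trajMeasurableSpace X] ((fun ω : ℕ → X => ω i) ⁻¹' s) := by
  have h : (MeasurableSpace.comap (fun ω : ℕ → X => ω i) (⊤ : MeasurableSpace X)) ≤
      trajMeasurableSpace X :=
    le_iSup (fun j : ℕ => MeasurableSpace.comap (fun ω : ℕ → X => ω j) (⊤ : MeasurableSpace X)) i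
  exact h _ ⟨s, trivial, rfl⟩

lemma measurableSet_Cyl {X : Type} (h : List X) :
    MeasurableSet[trajMeasurableSpace X] (Cyl h) := by
  have heq : Cyl h = ⋂ j : Fin h.length, (fun ω : ℕ → X => ω (j : ℕ)) ⁻¹' {h.get j} := by
    ext ω
    simp only [Set.mem_iInter, Set.mem_preimage, Set.mem_singleton_iff]
    constructor
    · intro hm j
      have := hm j j.2
      rw [List.getElem?_eq_getElem j.2] at this
      exact (Option.some.inj this).symm
    · intro hm i hi
      rw [List.getElem?_eq_getElem hi]
      exact congrArg some (hm ⟨i, hi⟩).symm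
  rw [heq]
  exact MeasurableSet.iInter fun j => measurableSet_eval_preimage _ _

lemma isPiSystem_Cyl (X : Type) : IsPiSystem {s : Set (ℕ → X) | ∃ h : List X, s = Cyl h} := by
  rintro s ⟨h, rfl⟩ t ⟨h', rfl⟩ hne
  obtain ⟨ω, hω, hω'⟩ := hne
  rw [mem_Cyl] at hω hω'
  have key : ∀ (l l' : List X), l.length ≤ l'.length → pfx ω l.length = l →
      pfx ω l'.length = l' → Cyl l' ⊆ Cyl l := by
    intro l l' hle hl hl' θ hθ
    rw [mem_Cyl] at hθ ⊢
    have e1 : pfx θ l.length = l'.take l.length := by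
      have h1 := pfx_take θ hle
      rw [hθ] at h1
      exact h1.symm
    have e2 : l'.take l.length = l := by
      have h1 := pfx_take ω hle
      rw [hl', hl] at h1
      exact h1
    rw [e1]; exact e2
  rcases le_total h.length h'.length with hle | hle
  · exact ⟨h', by rw [Set.inter_eq_right.mpr (key h h' hle hω hω')]⟩
  · exact ⟨h, by rw [Set.inter_eq_left.mpr (key h' h hle hω' hω)]⟩

lemma traj_generateFrom (X : Type) [Finite X] :
    (trajMeasurableSpace X) =
      MeasurableSpace.generateFrom {s : Set (ℕ → X) | ∃ h : List X, s = Cyl h} := by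
  apply le_antisymm
  · rw [show trajMeasurableSpace X =
        ⨆ i : ℕ, MeasurableSpace.comap (fun ω : ℕ → X => ω i) (⊤ : MeasurableSpace X) from rfl]
    refine iSup_le fun i => ?_
    intro t ht
    obtain ⟨s, -, rfl⟩ := ht
    have heq : (fun ω : ℕ → X => ω i) ⁻¹' s =
        ⋃ (v : Fin (i+1) → X) (_ : v (Fin.last i) ∈ s), Cyl (List.ofFn v) := by
      ext ω
      simp only [Set.mem_preimage, Set.mem_iUnion]
      constructor
      · intro hs
        refine ⟨fun j => ω (j : ℕ), by simpa using hs, ?_⟩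
        rw [mem_Cyl, List.length_ofFn]
        rfl
      · rintro ⟨v, hv, hω⟩
        have h2 := hω i (by simp)
        simp only [List.getElem?_ofFn, List.ofFnNthVal, Nat.lt_succ_self, dif_pos,
          Option.some.injEq] at h2
        have h3 : v (Fin.last i) = ω i := h2
        rwa [h3] at hv
    rw [heq]
    exact MeasurableSet.iUnion fun v => MeasurableSet.iUnion fun _ =>
      MeasurableSpace.measurableSet_generateFrom ⟨_, rfl⟩
  · exact MeasurableSpace.generateFrom_le (by rintro s ⟨h, rfl⟩; exact measurableSet_Cyl h)

lemma measurable_fin_dep {X : Type} [Finite X] {β : Type} [mβ : MeasurableSpace β]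
    (F : (ℕ → X) → β) (n : ℕ) (g : (Fin n → X) → β)
    (hg : ∀ ω, F ω = g (fun j => ω (j : ℕ))) :
    @Measurable _ _ (trajMeasurableSpace X) _ F := by
  letI : MeasurableSpace X := ⊤
  haveI : MeasurableSingletonClass X := ⟨fun _ => trivial⟩
  have h1 : Measurable (fun ω : ℕ → X => fun j : Fin n => ω (j : ℕ)) :=
    measurable_pi_lambda _ fun j => measurable_pi_apply _
  have h2 : Measurable g := measurable_of_countable g
  have h3 := h2.comp h1
  have : F = g ∘ (fun ω : ℕ → X => fun j : Fin n => ω (j : ℕ)) := funext hg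
  rw [this]
  exact h3

lemma measurable_into_traj {α Y : Type} {m : MeasurableSpace α} (f : α → (ℕ → Y))
    (h : ∀ i, @Measurable α Y m ⊤ (fun a => f a i)) :
    @Measurable α (ℕ → Y) m (trajMeasurableSpace Y) f := by
  rw [measurable_iff_comap_le]
  have : (trajMeasurableSpace Y) =
      ⨆ i : ℕ, MeasurableSpace.comap (fun ω : ℕ → Y => ω i) (⊤ : MeasurableSpace Y) := rfl
  rw [this, MeasurableSpace.comap_iSup]
  refine iSup_le fun i => ?_
  rw [MeasurableSpace.comap_comp]
  exact measurable_iff_comap_le.mp (h i)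


lemma homNodeAt_Phi (ω : ℕ → (A ⊕ Unit) × S) (i : ℕ) :
    homNodeAt u0 (PhiMap lab δu u0 ω) i = nodeAtReset lab δu u0 ω i := by
  cases i with
  | zero => rfl
  | succ n => rfl

lemma homRewAt_Phi (δr : U → Z → ℝ) (c : ℝ) (ω : ℕ → (A ⊕ Unit) × S) (i : ℕ) :
    homRewAt lab δr u0 c (PhiMap lab δu u0 ω) i = rewAtReset lab δu δr u0 c ω i := by
  unfold homRewAt rewAtReset
  rcases hx : (ω i).1 with a | x
  · simp only [PhiMap, hx, homNodeAt_Phi]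
  · simp only [PhiMap, hx]

lemma lift_ofFn (ω : ℕ → (A ⊕ Unit) × S) :
    ∀ (n k : ℕ),
      liftHistReset lab δu u0 (nodeAtReset lab δu u0 ω k)
          (List.ofFn fun j : Fin n => ω (k + (j : ℕ))) =
        List.ofFn (fun j : Fin n => PhiMap lab δu u0 ω (k + (j : ℕ))) := by
  intro n
  induction n with
  | zero => intro k; simp [liftHistReset]
  | succ n ih =>
    intro k
    rw [List.ofFn_succ, List.ofFn_succ]
    have hidx : ∀ j : Fin n, k + ((j.succ : Fin (n+1)) : ℕ) = (k + 1) + (j : ℕ) := by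
      intro j; simp [Fin.val_succ]; omega
    cases hωk : ω k with
    | mk a1 s1 =>
      cases a1 with
      | inl a =>
        have hnode : nodeAtReset lab δu u0 ω (k + 1) =
            δu (nodeAtReset lab δu u0 ω k) (lab a s1) := by
          show (match (ω k).1 with
            | Sum.inl a => δu (nodeAtReset lab δu u0 ω k) (lab a (ω k).2)
            | Sum.inr _ => u0) = _
          rw [hωk]
        simp only [Fin.val_zero, Nat.add_zero, hωk, liftHistReset]
        congr 1
        · show (Sum.inl a, (s1, δu (nodeAtReset lab δu u0 ω k) (lab a s1))) =
            PhiMap lab δu u0 ω k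
          simp [PhiMap, hωk, hnode]
        · rw [← hnode]
          simp only [hidx]
          exact ih (k + 1)
      | inr x =>
        have hnode : nodeAtReset lab δu u0 ω (k + 1) = u0 := by
          show (match (ω k).1 with
            | Sum.inl a => δu (nodeAtReset lab δu u0 ω k) (lab a (ω k).2)
            | Sum.inr _ => u0) = _
          rw [hωk]
        simp only [Fin.val_zero, Nat.add_zero, hωk, liftHistReset]
        congr 1
        · show (Sum.inr x, (s1, u0)) = PhiMap lab δu u0 ω k
          simp [PhiMap, hωk, hnode]
        · have := ih (k + 1)
          rw [hnode] at this
          simp only [hidx]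
          exact this

lemma lift_pfx (ω : ℕ → (A ⊕ Unit) × S) (n : ℕ) :
    liftHistReset lab δu u0 u0 (pfx ω n) = pfx (PhiMap lab δu u0 ω) n := by
  have := lift_ofFn lab δu u0 ω n 0
  simpa [pfx, nodeAtReset] using this

lemma strip_lift : ∀ (l : List ((A ⊕ Unit) × S)) (u : U),
    stripL (liftHistReset lab δu u0 u l) = l := by
  intro l
  induction l with
  | nil => intro u; rfl
  | cons x rest ih =>
    intro u
    rcases x with ⟨a | y, s'⟩ <;> simp [liftHistReset, stripL] at ih ⊢ <;> exact ih _

end Comb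

section Comb2
variable (lab : A → S → Z) (δu : U → Z → U) (u0 : U)

lemma phi_preimage (h' : List ((A ⊕ Unit) × (S × U))) :
    PhiMap lab δu u0 ⁻¹' Cyl h' =
      if h' = liftHistReset lab δu u0 u0 (stripL h') then Cyl (stripL h') else ∅ := by
  have hlen : (stripL h').length = h'.length := List.length_map _
  split_ifs with hc
  · ext ω
    simp only [Set.mem_preimage]
    rw [mem_Cyl, mem_Cyl, hlen]
    constructor
    · intro hp
      have h1 := lift_pfx lab δu u0 ω h'.length
      rw [hp] at h1
      have h2 := congrArg stripL h1
      rw [strip_lift] at h2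
      exact h2
    · intro hp
      have h1 := lift_pfx lab δu u0 ω h'.length
      rw [hp, ← hc] at h1
      exact h1.symm
  · ext ω
    simp only [Set.mem_preimage, Set.mem_empty_iff_false, iff_false]
    intro hmem
    rw [mem_Cyl] at hmem
    have h1 := lift_pfx lab δu u0 ω h'.length
    rw [hmem] at h1
    have h2 := congrArg stripL h1.symm
    rw [strip_lift] at h2
    apply hc
    rw [h2]
    exact h1.symm

def nodeFrom : U → List ((A ⊕ Unit) × S) → U
  | u, [] => u
  | u, (Sum.inl a, s') :: rest => nodeFrom (δu u (lab a s')) rest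
  | _, (Sum.inr _, _) :: rest => nodeFrom u0 rest

lemma nodeFrom_append_inl (l : List ((A ⊕ Unit) × S)) (u : U) (a : A) (s' : S) :
    nodeFrom lab δu u0 u (l ++ [(Sum.inl a, s')]) =
      δu (nodeFrom lab δu u0 u l) (lab a s') := by
  induction l generalizing u with
  | nil => rfl
  | cons y rest ih =>
    rcases y with ⟨b | x, t⟩ <;> simp only [List.cons_append, nodeFrom] <;> exact ih _

lemma nodeFrom_append_inr (l : List ((A ⊕ Unit) × S)) (u : U) (x : Unit) (s' : S) :
    nodeFrom lab δu u0 u (l ++ [(Sum.inr x, s')]) = u0 := by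
  induction l generalizing u with
  | nil => rfl
  | cons y rest ih =>
    rcases y with ⟨b | z, t⟩ <;> simp only [List.cons_append, nodeFrom] <;> exact ih _

lemma lift_append (l l' : List ((A ⊕ Unit) × S)) (u : U) :
    liftHistReset lab δu u0 u (l ++ l') =
      liftHistReset lab δu u0 u l ++
        liftHistReset lab δu u0 (nodeFrom lab δu u0 u l) l' := by
  induction l generalizing u with
  | nil => rfl
  | cons y rest ih =>
    rcases y with ⟨b | z, t⟩ <;>
      simp only [List.cons_append, liftHistReset, nodeFrom] <;> exact congrArg _ (ih _)

lemma pfx_getElem {X : Type} (ω : ℕ → X) (n i : ℕ) (h : i < (pfx ω n).length) :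
    (pfx ω n)[i] = ω i := List.getElem_ofFn _

lemma pfx_succ {X : Type} (ω : ℕ → X) (n : ℕ) : pfx ω (n + 1) = pfx ω n ++ [ω n] := by
  apply List.ext_getElem (by simp [pfx])
  intro i h1 h2
  rw [pfx_getElem]
  by_cases hi : i < n
  · rw [List.getElem_append_left (by simpa [pfx] using hi)]
    exact (pfx_getElem ω n i (by simpa [pfx] using hi)).symm
  · have hin : i = n := by simp [pfx] at h1; omega
    subst hin
    rw [List.getElem_append_right (by simp [pfx])]
    simp [pfx]

lemma nodeAtReset_pfx (ω : ℕ → (A ⊕ Unit) × S) (n : ℕ) :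
    nodeAtReset lab δu u0 ω n = nodeFrom lab δu u0 u0 (pfx ω n) := by
  induction n with
  | zero => rfl
  | succ m ih =>
    rw [pfx_succ]
    cases hωm : ω m with
    | mk a1 s1 =>
      cases a1 with
      | inl a =>
        rw [nodeFrom_append_inl]
        show (match (ω m).1 with
          | Sum.inl a => δu (nodeAtReset lab δu u0 ω m) (lab a (ω m).2)
          | Sum.inr _ => u0) = _
        rw [hωm, ih]
      | inr x =>
        rw [nodeFrom_append_inr]
        show (match (ω m).1 with
          | Sum.inl a => δu (nodeAtReset lab δu u0 ω m) (lab a (ω m).2)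
          | Sum.inr _ => u0) = _
        rw [hωm]

end Comb2

section ES
variable {St Ac : Type}

def endState (s : St) : List (Ac × St) → St
  | [] => s
  | x :: rest => endState x.2 rest

lemma endState_append (s : St) (l : List (Ac × St)) (x : Ac × St) :
    endState s (l ++ [x]) = x.2 := by
  induction l generalizing s with
  | nil => rfl
  | cons y rest ih => exact ih y.2

lemma validFrom_append (T : St → Ac → St → ℝ) (s : St)
    (l : List (Ac × St)) (x : Ac × St) :
    ValidFrom T s (l ++ [x]) ↔ ValidFrom T s l ∧ 0 < T (endState s l) x.1 x.2 := by
  induction l generalizing s with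
  | nil => simp [ValidFrom, endState]
  | cons y rest ih =>
    rw [List.cons_append]
    show (0 < T s y.1 y.2 ∧ ValidFrom T y.2 (rest ++ [x])) ↔
      (0 < T s y.1 y.2 ∧ ValidFrom T y.2 rest) ∧ 0 < T (endState y.2 rest) x.1 x.2
    rw [ih y.2]
    tauto

end ES

section Prob
variable (T : S → A → S → ℝ) (s0 : S) (lab : A → S → Z) (δu : U → Z → U) (u0 : U)
variable (π : List ((A ⊕ Unit) × S) → A ⊕ Unit)
variable (πP : List ((A ⊕ Unit) × (S × U)) → A ⊕ Unit)

lemma prob_eq (hTnn : ∀ s a s', 0 ≤ T s a s')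
    (hcorr : ∀ h, ValidFrom (resetT T s0) s0 h →
      πP (liftHistReset lab δu u0 u0 h) = π h) :
    ∀ (h past : List ((A ⊕ Unit) × S)),
      ValidFrom (resetT T s0) s0 past →
      prefixProbAux (resetT T s0) π (endState s0 past) past h =
        prefixProbAux (homT T lab δu s0 u0) πP
          (endState s0 past, nodeFrom lab δu u0 u0 past)
          (liftHistReset lab δu u0 u0 past)
          (liftHistReset lab δu u0 (nodeFrom lab δu u0 u0 past) h) := by
  intro h
  induction h with
  | nil => intro past hv; rfl
  | cons x rest ih =>
    intro past hv
    obtain ⟨a, s'⟩ := x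
    have hπ : πP (liftHistReset lab δu u0 u0 past) = π past := hcorr past hv
    cases a with
    | inl a₀ =>
      simp only [liftHistReset, prefixProbAux]
      rw [hπ]
      by_cases hT0 : T (endState s0 past) a₀ s' = 0
      · simp [resetT, homT, hT0]
      · have hpos : 0 < T (endState s0 past) a₀ s' :=
          lt_of_le_of_ne (hTnn _ _ _) (Ne.symm hT0)
        have hv' : ValidFrom (resetT T s0) s0 (past ++ [(Sum.inl a₀, s')]) :=
          (validFrom_append _ _ _ _).mpr ⟨hv, by simpa [resetT] using hpos⟩
        have key := ih (past ++ [(Sum.inl a₀, s')]) hv'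
        rw [endState_append] at key
        rw [nodeFrom_append_inl] at key
        rw [lift_append] at key
        simp only [liftHistReset, nodeFrom_append_inl] at key
        have hfac : resetT T s0 (endState s0 past) (Sum.inl a₀) s' =
            homT T lab δu s0 u0 (endState s0 past, nodeFrom lab δu u0 u0 past)
              (Sum.inl a₀) (s', δu (nodeFrom lab δu u0 u0 past) (lab a₀ s')) := by
          simp [resetT, homT]
        rw [key, hfac]
    | inr xx =>
      simp only [liftHistReset, prefixProbAux]
      rw [hπ]
      by_cases hs' : s' = s0
      · have hv' : ValidFrom (resetT T s0) s0 (past ++ [(Sum.inr xx, s')]) :=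
          (validFrom_append _ _ _ _).mpr ⟨hv, by simp [resetT, hs']⟩
        have key := ih (past ++ [(Sum.inr xx, s')]) hv'
        rw [endState_append] at key
        rw [nodeFrom_append_inr] at key
        rw [lift_append] at key
        simp only [liftHistReset, nodeFrom_append_inr] at key
        have hfac : resetT T s0 (endState s0 past) (Sum.inr xx) s' =
            homT T lab δu s0 u0 (endState s0 past, nodeFrom lab δu u0 u0 past)
              (Sum.inr xx) (s', u0) := by
          simp [resetT, homT, Prod.ext_iff]
        rw [key, hfac]
      · simp [resetT, homT, hs', Prod.ext_iff]

lemma prob_zero :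
    ∀ (h' : List ((A ⊕ Unit) × (S × U))) (past : List ((A ⊕ Unit) × (S × U)))
      (p : S × U),
      h' ≠ liftHistReset lab δu u0 p.2 (stripL h') →
      prefixProbAux (homT T lab δu s0 u0) πP p past h' = 0 := by
  intro h'
  induction h' with
  | nil => intro past p hne; exact absurd rfl hne
  | cons x rest ih =>
    intro past p hne
    obtain ⟨a, q⟩ := x
    cases a with
    | inl a₀ =>
      by_cases hq : q.2 = δu p.2 (lab a₀ q.1)
      · have hrest : rest ≠ liftHistReset lab δu u0 q.2 (stripL rest) := by
          intro hr
          apply hne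
          show (Sum.inl a₀, q) :: rest =
            liftHistReset lab δu u0 p.2 (stripL ((Sum.inl a₀, q) :: rest))
          simp only [stripL, List.map_cons, liftHistReset]
          refine congrArg₂ List.cons ?_ ?_
          · rw [← hq]
          · rw [← hq]
            exact hr
        simp only [prefixProbAux]
        rw [ih _ q hrest, mul_zero]
      · simp [prefixProbAux, homT, hq]
    | inr xx =>
      by_cases hq : q = (s0, u0)
      · have hrest : rest ≠ liftHistReset lab δu u0 q.2 (stripL rest) := by
          intro hr
          apply hne
          show (Sum.inr xx, q) :: rest =
            liftHistReset lab δu u0 p.2 (stripL ((Sum.inr xx, q) :: rest))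
          simp only [stripL, List.map_cons, liftHistReset]
          refine congrArg₂ List.cons ?_ ?_
          · rw [hq]
          · rw [hq] at hr
            exact hr
        simp only [prefixProbAux]
        rw [ih _ q hrest, mul_zero]
      · simp [prefixProbAux, homT, hq]

end Prob

section Meas
variable [Fintype S] [Fintype A] [Fintype U] [Fintype Z]
variable (lab : A → S → Z) (δu : U → Z → U) (u0 : U)

lemma measurable_PhiMap :
    @Measurable _ _ (trajMeasurableSpace ((A ⊕ Unit) × S))
      (trajMeasurableSpace ((A ⊕ Unit) × (S × U))) (PhiMap lab δu u0) := by
  apply measurable_into_traj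
  intro i
  refine @measurable_fin_dep _ _ _ ⊤ _ (i + 1)
    (fun v => ((v (Fin.last i)).1, ((v (Fin.last i)).2,
      nodeFrom lab δu u0 u0 (List.ofFn v)))) ?_
  intro ω
  show ((ω i).1, ((ω i).2, nodeAtReset lab δu u0 ω (i + 1))) = _
  rw [nodeAtReset_pfx]
  rfl

lemma measurable_homRew (δr : U → Z → ℝ) (c : ℝ) (i : ℕ) :
    @Measurable _ _ (trajMeasurableSpace ((A ⊕ Unit) × (S × U))) _
      (fun ω => homRewAt lab δr u0 c ω i) := by
  cases i with
  | zero =>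
    refine measurable_fin_dep _ 1 (fun v =>
      match (v 0).1 with
      | Sum.inl a => δr u0 (lab a (v 0).2.1)
      | Sum.inr _ => c) ?_
    intro ω
    rfl
  | succ n =>
    refine measurable_fin_dep _ (n + 2) (fun v =>
      match (v (Fin.last (n + 1))).1 with
      | Sum.inl a => δr (v ⟨n, by omega⟩).2.2 (lab a (v (Fin.last (n + 1))).2.1)
      | Sum.inr _ => c) ?_
    intro ω
    rfl

lemma measurable_meanPayoff_homRew (δr : U → Z → ℝ) (c : ℝ) :
    @Measurable _ _ (trajMeasurableSpace ((A ⊕ Unit) × (S × U))) _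
      (fun ω => meanPayoff (homRewAt lab δr u0 c ω)) := by
  have : (fun ω => meanPayoff (homRewAt lab δr u0 c ω)) =
      fun ω => Filter.limsup (fun k : ℕ =>
        (∑ i ∈ Finset.range k, homRewAt lab δr u0 c ω i) / (k : ℝ)) Filter.atTop := rfl
  rw [this]
  apply Measurable.limsup
  intro k
  exact (Finset.measurable_sum (Finset.range k)
    (fun i _ => measurable_homRew lab u0 δr c i)).div_const _

end Meas

/-- For every strategy `π` for `M↻` and the corresponding
strategy `π^{⊗↻}` for the homing synchronized product `P↻ = M ⊗↻_λ R`,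
the expected mean payoffs coincide. -/
theorem expected_meanPayoff_eq_homing_product
    [Fintype S] [Fintype A] [Fintype U] [Fintype Z]
    (M : NRMDP S A) (null : Z) (lab : A → S → Z) (R : MRM U Z null) (creset : ℝ)
    (π : List ((A ⊕ Unit) × S) → A ⊕ Unit)
    (πP : List ((A ⊕ Unit) × (S × U)) → A ⊕ Unit)
    (hcorr : ∀ h : List ((A ⊕ Unit) × S), ValidFrom (resetT M.T M.s0) M.s0 h →
      πP (liftHistReset lab R.δu R.u0 R.u0 h) = π h)
    (μM : MeasureTheory.Measure (ℕ → (A ⊕ Unit) × S))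
    (μP : MeasureTheory.Measure (ℕ → (A ⊕ Unit) × (S × U)))
    (hμM : IsInduced (resetT M.T M.s0) π M.s0 μM)
    (hμP : IsInduced (homT M.T lab R.δu M.s0 R.u0) πP ((M.s0 : S), (R.u0 : U)) μP) :
    ∫ ω, meanPayoff (rewAtReset lab R.δu R.δr R.u0 creset ω) ∂μM =
      ∫ ω, meanPayoff (homRewAt lab R.δr R.u0 creset ω) ∂μP := by
  classical
  obtain ⟨hPM, hM⟩ := hμM
  obtain ⟨hPP, hP⟩ := hμP
  haveI := hPM
  haveI := hPP
  have hΦ : Measurable (PhiMap lab R.δu R.u0) := measurable_PhiMap lab R.δu R.u0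
  have hfmeas : Measurable (fun ω => meanPayoff (homRewAt lab R.δr R.u0 creset ω)) :=
    measurable_meanPayoff_homRew lab R.u0 R.δr creset
  have hmap : μP = Measure.map (PhiMap lab R.δu R.u0) μM := by
    refine MeasureTheory.ext_of_generate_finite _ (traj_generateFrom _) (isPiSystem_Cyl _)
      ?_ ?_
    · rintro s ⟨h', rfl⟩
      rw [hP h', Measure.map_apply hΦ (measurableSet_Cyl h'), phi_preimage]
      split_ifs with hc
      · rw [hM (stripL h')]
        congr 1
        have he := prob_eq M.T M.s0 lab R.δu R.u0 π πP
          (fun s a s' => M.T_nonneg s a s') hcorr (stripL h') [] trivial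
        simp only [nodeFrom, endState, liftHistReset] at he
        rw [← hc] at he
        exact he.symm
      · rw [show prefixProb (homT M.T lab R.δu M.s0 R.u0) πP (M.s0, R.u0) h' = 0 from
          prob_zero M.T M.s0 lab R.δu R.u0 πP h' [] (M.s0, R.u0) hc]
        simp
    · rw [Measure.map_apply hΦ MeasurableSet.univ]
      simp [Set.preimage_univ, measure_univ]
  rw [hmap, MeasureTheory.integral_map hΦ.aemeasurable hfmeas.aestronglyMeasurable]
  refine integral_congr_ae (Filter.Eventually.of_forall fun ω => ?_)
  exact congrArg meanPayoff
    (funext fun i => (homRewAt_Phi lab R.δu R.u0 R.δr creset ω i).symm)
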